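/- Let v be a positive integer, p ∈ [0, 1] with p > 0, and κ ∈ (0, 1). Let X₁, …, X_v be independent Bernoulli random variables on a probability space with P(Xᵢ = 1) = pᵢ ≤ p for each i, and set X = X₁ + ⋯ + X_v. Let m = v·p and δ = (-ln κ + √((ln κ)² - 8·m·(ln κ)))/(2·m). Then P(X ≥ (1 + δ)·v·p) ≤ κ. -/

import Mathlib

open MeasureTheory ProbabilityTheory

lemma pade_exp {x : ℝ} (hx : 0 ≤ x) : 2 - x ≤ (2 + x) * Real.exp (-x) := by
  set f : ℝ → ℝ := fun y => (2 + y) * Real.exp (-y) + y with hf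
  have hderiv : ∀ y : ℝ, HasDerivAt f (1 - (1 + y) * Real.exp (-y)) y := by
    intro y
    have h1 : HasDerivAt (fun y : ℝ => 2 + y) 1 y := (hasDerivAt_id y).const_add 2
    have h2 : HasDerivAt (fun y : ℝ => Real.exp (-y)) (-Real.exp (-y)) y := by
      simpa using (hasDerivAt_neg y).exp
    have h3 := (h1.mul h2).add (hasDerivAt_id y)
    refine h3.congr_deriv ?_
    ring
  have hmono : MonotoneOn f (Set.Ici (0:ℝ)) := by
    apply monotoneOn_of_deriv_nonneg (convex_Ici 0)
    · exact fun y _ => ((hderiv y).continuousAt).continuousWithinAt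
    · exact fun y _ => ((hderiv y).differentiableAt).differentiableWithinAt
    · intro y hy
      rw [(hderiv y).deriv]
      have h4 : (1 + y) * Real.exp (-y) ≤ 1 := by
        have h5 := mul_le_mul_of_nonneg_right (Real.add_one_le_exp y) (Real.exp_pos (-y)).le
        rw [← Real.exp_add, add_neg_cancel, Real.exp_zero] at h5
        linarith
      linarith
  have := hmono (Set.self_mem_Ici) (Set.mem_Ici.2 hx) hx
  simp only [hf, neg_zero, Real.exp_zero, mul_one] at this
  linarith

set_option maxHeartbeats 1600000 in
/-- APT Filtering Guarantee: let `X = X₁ + ⋯ + X_v` be a sum of `v` independent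
Bernoulli random variables with `P(Xᵢ = 1) = pᵢ ≤ p`, let `m = v·p` and
`δ = (-ln κ + √((ln κ)² - 8·m·(ln κ)))/(2·m)`. Then `P(X ≥ (1 + δ)·v·p) ≤ κ`. -/
theorem apt_filtering_guarantee
    {Ω : Type*} [MeasureSpace Ω] [IsProbabilityMeasure (ℙ : Measure Ω)]
    (v : ℕ) (hv : 0 < v) (p κ : ℝ) (hp0 : 0 ≤ p) (hp1 : p ≤ 1) (hppos : 0 < p)
    (hκ : κ ∈ Set.Ioo (0 : ℝ) 1)
    (X : Fin v → Ω → ℝ)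
    (hmeas : ∀ i, Measurable (X i))
    (hBer : ∀ i ω, X i ω = 0 ∨ X i ω = 1)
    (hindep : iIndepFun X ℙ)
    (hXp : ∀ i, (ℙ {ω | X i ω = 1}).toReal ≤ p)
    (m δ : ℝ) (hm : m = v * p)
    (hδ : δ = (-Real.log κ + Real.sqrt ((Real.log κ) ^ 2 - 8 * m * Real.log κ)) / (2 * m)) :
    (ℙ {ω | (1 + δ) * (v * p) ≤ ∑ i, X i ω}).toReal ≤ κ := by
  obtain ⟨hκ0, hκ1⟩ := hκ
  set L : ℝ := -Real.log κ with hLdef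
  have hLpos : 0 < L := by
    have := Real.log_neg hκ0 hκ1
    simp only [hLdef]; linarith
  have hvpos : (0:ℝ) < v := Nat.cast_pos.mpr hv
  have hmpos : 0 < m := by rw [hm]; positivity
  have hsq : (Real.log κ) ^ 2 - 8 * m * Real.log κ = L ^ 2 + 8 * m * L := by
    simp only [hLdef]; ring
  have hsqnn : (0:ℝ) ≤ L ^ 2 + 8 * m * L := by positivity
  have hsqrt_nn : 0 ≤ Real.sqrt (L ^ 2 + 8 * m * L) := Real.sqrt_nonneg _
  have hsqrt : Real.sqrt (L ^ 2 + 8 * m * L) ^ 2 = L ^ 2 + 8 * m * L := Real.sq_sqrt hsqnn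
  have hδ' : δ * (2 * m) = L + Real.sqrt (L ^ 2 + 8 * m * L) := by
    rw [hδ, hsq]; field_simp
  have hδpos : 0 < δ := by
    rw [hδ, hsq]
    apply div_pos _ (by linarith)
    linarith
  have key : m * δ ^ 2 = L * δ + 2 * L := by
    have h1 : δ * (2 * m) - L = Real.sqrt (L ^ 2 + 8 * m * L) := by linarith
    have h2 : (δ * (2 * m) - L) ^ 2 = L ^ 2 + 8 * m * L := by rw [h1, hsqrt]
    have h4 : (4 * m) * (m * δ ^ 2) = (4 * m) * (L * δ + 2 * L) := by nlinarith [h2]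
    exact mul_left_cancel₀ (by positivity) h4
  set t : ℝ := 2 * δ / (2 + δ) with htdef
  have h2δ : (0:ℝ) < 2 + δ := by linarith
  have htpos : 0 ≤ t := by positivity
  have hexp_t : Real.exp t ≤ 1 + δ := by
    have hp' := pade_exp htpos
    have hepos := Real.exp_pos t
    have h5 : (2 - t) * Real.exp t ≤ 2 + t := by
      have h6 := mul_le_mul_of_nonneg_right hp' hepos.le
      rw [mul_assoc, ← Real.exp_add, neg_add_cancel, Real.exp_zero, mul_one] at h6
      linarith
    have ht2 : t * (2 + δ) = 2 * δ := by rw [htdef]; field_simp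
    nlinarith [h5, h2δ, hepos]
  have h10 : 0 ≤ Real.exp t - 1 := by
    have := Real.add_one_le_exp t; linarith
  -- basic facts about the Bernoulli variables
  have hsetmeas : ∀ i, MeasurableSet {ω | X i ω = 1} :=
    fun i => hmeas i (measurableSet_singleton 1)
  have hind : ∀ i, X i = Set.indicator {ω | X i ω = 1} (fun _ => (1:ℝ)) := by
    intro i; funext ω
    rcases hBer i ω with h | h
    · rw [h, Set.indicator_apply_eq_zero.mpr]
      intro hmem; simp only [Set.mem_setOf_eq] at hmem
      rw [h] at hmem; norm_num at hmem
    · rw [h, Set.indicator_of_mem (by simp [Set.mem_setOf_eq, h])]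
  have hXint : ∀ i, Integrable (X i) ℙ := by
    intro i; rw [hind i]
    exact (integrable_const (1:ℝ)).indicator (hsetmeas i)
  have hEX : ∀ i, (∫ ω, X i ω) = (ℙ {ω | X i ω = 1}).toReal := by
    intro i
    conv_lhs => rw [hind i]
    rw [integral_indicator_const (1:ℝ) (hsetmeas i)]
    simp [Measure.real]
  have hptwise : ∀ i, (fun ω => Real.exp (t * X i ω))
      = fun ω => 1 + (Real.exp t - 1) * X i ω := by
    intro i; funext ω
    rcases hBer i ω with h | h <;> rw [h] <;> simp
  have hmgf_int : ∀ i, Integrable (fun ω => Real.exp (t * X i ω)) ℙ := by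
    intro i; rw [hptwise i]
    exact (integrable_const 1).add ((hXint i).const_mul _)
  have hmgf_le : ∀ i, mgf (X i) ℙ t ≤ Real.exp (p * (Real.exp t - 1)) := by
    intro i
    have h9 : mgf (X i) ℙ t = 1 + (Real.exp t - 1) * (ℙ {ω | X i ω = 1}).toReal := by
      rw [mgf]
      change (∫ ω, Real.exp (t * X i ω)) = _
      rw [hptwise i, integral_add (integrable_const 1) ((hXint i).const_mul _),
        integral_const, integral_const_mul, hEX i]
      simp [Measure.real]
    rw [h9]
    have hle1 : 1 + (Real.exp t - 1) * (ℙ {ω | X i ω = 1}).toReal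
        ≤ 1 + (Real.exp t - 1) * p := by
      have := mul_le_mul_of_nonneg_left (hXp i) h10
      linarith
    have hle2 : 1 + (Real.exp t - 1) * p ≤ Real.exp (p * (Real.exp t - 1)) := by
      have := Real.add_one_le_exp (p * (Real.exp t - 1))
      linarith [mul_comm (Real.exp t - 1) p]
    linarith
  -- Chernoff
  set S : Ω → ℝ := ∑ i, X i with hSdef
  have hSapp : ∀ ω, S ω = ∑ i, X i ω := by intro ω; simp [hSdef]
  have hSint : Integrable (fun ω => Real.exp (t * S ω)) ℙ :=
    hindep.integrable_exp_mul_sum hmeas (fun i _ => hmgf_int i)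
  have hchern := measure_ge_le_exp_mul_mgf (μ := (ℙ : Measure Ω)) (X := S)
    ((1 + δ) * (v * p)) htpos hSint
  have hset : {ω | (1 + δ) * (v * p) ≤ ∑ i, X i ω} = {ω | (1 + δ) * (v * p) ≤ S ω} := by
    ext ω; simp [hSapp]
  rw [hset]
  have hmgfS : mgf S ℙ t ≤ Real.exp (m * (Real.exp t - 1)) := by
    rw [hSdef, hindep.mgf_sum hmeas]
    calc (∏ i, mgf (X i) ℙ t) ≤ ∏ _i : Fin v, Real.exp (p * (Real.exp t - 1)) :=
          Finset.prod_le_prod (fun i _ => mgf_nonneg) (fun i _ => hmgf_le i)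
      _ = Real.exp (v * (p * (Real.exp t - 1))) := by
          rw [Finset.prod_const, Finset.card_univ, Fintype.card_fin, ← Real.exp_nat_mul]
      _ = Real.exp (m * (Real.exp t - 1)) := by rw [hm]; ring_nf
  have hfinal : Real.exp (-t * ((1 + δ) * (v * p))) * Real.exp (m * (Real.exp t - 1)) ≤ κ := by
    rw [← Real.exp_add]
    have hexpo : -t * ((1 + δ) * (v * p)) + m * (Real.exp t - 1) ≤ -L := by
      have hident : -t * ((1 + δ) * m) + m * δ = -L := by
        have ht2 : t * (2 + δ) = 2 * δ := by rw [htdef]; field_simp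
        have : (-t * ((1 + δ) * m) + m * δ) * (2 + δ) = -L * (2 + δ) := by
          nlinarith [ht2, key]
        exact mul_right_cancel₀ (ne_of_gt h2δ) this
      have hEt : m * (Real.exp t - 1) ≤ m * δ := by nlinarith [hexp_t]
      rw [← hm] at *
      linarith
    calc Real.exp (-t * ((1 + δ) * (v * p)) + m * (Real.exp t - 1))
        ≤ Real.exp (-L) := Real.exp_le_exp.mpr hexpo
      _ = κ := by rw [hLdef, neg_neg, Real.exp_log hκ0]
  calc (ℙ {ω | (1 + δ) * (v * p) ≤ S ω}).toReal
      ≤ Real.exp (-t * ((1 + δ) * (v * p))) * mgf S ℙ t := hchern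
    _ ≤ Real.exp (-t * ((1 + δ) * (v * p))) * Real.exp (m * (Real.exp t - 1)) := by
        exact mul_le_mul_of_nonneg_left hmgfS (Real.exp_pos _).le
    _ ≤ κ := hfinal
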